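/- If G has m ≥ 1 edges, M₁ denotes the minimum of the d-radii of the edges of G, R_g the geometric mean of the d-radii, and σ² = (1/m) Σ_{uv ∈ E(G)} (|z_{uv}| − SO(G)/m)² the variance of the d-radii, then SO(G) ≤ m·(R_g + σ²/(2M₁)). -/

import Mathlib

open Finset Real

noncomputable def dRad {V : Type*} [Fintype V] (G : SimpleGraph V) [DecidableRel G.Adj]
    (e : Sym2 V) : ℝ :=
  Sym2.lift ⟨fun u v => Real.sqrt ((G.degree u : ℝ) ^ 2 + (G.degree v : ℝ) ^ 2),
    fun u v => by simp [add_comm]⟩ e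

noncomputable def somborIndex {V : Type*} [Fintype V] [DecidableEq V] (G : SimpleGraph V)
    [DecidableRel G.Adj] : ℝ :=
  ∑ e ∈ G.edgeFinset, dRad G e

lemma dRad_pos {V : Type*} [Fintype V] (G : SimpleGraph V) [DecidableRel G.Adj]
    (e : Sym2 V) (he : e ∈ G.edgeFinset) : 0 < dRad G e := by
  induction e using Sym2.ind with
  | _ u v =>
    rw [SimpleGraph.mem_edgeFinset, SimpleGraph.mem_edgeSet] at he
    have hu : 0 < G.degree u := by
      rw [SimpleGraph.degree_pos_iff_exists_adj]
      exact ⟨v, he⟩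
    have : (0:ℝ) < (G.degree u : ℝ) ^ 2 + (G.degree v : ℝ) ^ 2 := by positivity
    simpa [dRad] using Real.sqrt_pos.2 this
open Real

lemma keyDeriv (M A : ℝ) {x : ℝ} (hx : 0 < x) :
    HasDerivAt (fun x => Real.log x - (x - A)/A + (x - A)^2/(2*M*A))
      (x⁻¹ - 1/A + (2*(x - A))/(2*M*A)) x := by
  have h1 : HasDerivAt (fun x : ℝ => Real.log x) x⁻¹ x := Real.hasDerivAt_log hx.ne'
  have h2 : HasDerivAt (fun x : ℝ => (x - A)/A) (1/A) x := by
    simpa using ((hasDerivAt_id x).sub_const A).div_const A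
  have h3 : HasDerivAt (fun x : ℝ => (x - A)^2/(2*M*A)) ((2*(x - A))/(2*M*A)) x := by
    have := (((hasDerivAt_id x).sub_const A).pow 2).div_const (2*M*A)
    simpa using this
  exact (h1.sub h2).add h3

lemma keyLog (M A : ℝ) (hM : 0 < M) (hMA : M ≤ A) {x : ℝ} (hx : M ≤ x) :
    Real.log A + (x - A)/A - (x - A)^2/(2*M*A) ≤ Real.log x := by
  have hA : 0 < A := hM.trans_le hMA
  set F : ℝ → ℝ := fun x => Real.log x - (x - A)/A + (x - A)^2/(2*M*A) with hF
  have hFA : F A = Real.log A := by simp [hF]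
  have hdiff : ∀ y ∈ Set.Ici M, DifferentiableAt ℝ F y := fun y hy =>
    (keyDeriv M A (hM.trans_le hy)).differentiableAt
  have hcont : ContinuousOn F (Set.Ici M) := fun y hy =>
    (hdiff y hy).continuousAt.continuousWithinAt
  have hsign : ∀ y, 0 < y → deriv F y = (y - A)*(y - M)/(y*M*A) := by
    intro y hy
    rw [(keyDeriv M A hy).deriv]
    field_simp
    ring
  have key : F A ≤ F x := by
    rcases le_total x A with h | h
    · -- antitone on [M, A]
      have hanti : AntitoneOn F (Set.Icc M A) := by
        apply antitoneOn_of_deriv_nonpos (convex_Icc M A) (hcont.mono Set.Icc_subset_Ici_self)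
          (fun y hy => (hdiff y (Set.mem_Ici.2 (le_of_lt (Set.mem_Ioo.1 (by rwa [interior_Icc] at hy)).1))).differentiableWithinAt)
        intro y hy
        rw [interior_Icc] at hy
        have hyM : M < y := hy.1
        have hy0 : 0 < y := hM.trans hyM
        rw [hsign y hy0]
        apply div_nonpos_of_nonpos_of_nonneg
        · nlinarith [hy.2]
        · positivity
      exact hanti (Set.mem_Icc.2 ⟨hx, h⟩) (Set.mem_Icc.2 ⟨hMA, le_refl A⟩) h
    · -- monotone on [A, ∞)
      have hmono : MonotoneOn F (Set.Ici A) := by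
        apply monotoneOn_of_deriv_nonneg (convex_Ici A) (hcont.mono (Set.Ici_subset_Ici.2 hMA))
          (fun y hy => (hdiff y (Set.mem_Ici.2 (hMA.trans (le_of_lt (by rwa [interior_Ici] at hy))))).differentiableWithinAt)
        intro y hy
        rw [interior_Ici] at hy
        have hy0 : 0 < y := hA.trans hy
        rw [hsign y hy0]
        apply div_nonneg
        · have := Set.mem_Ioi.1 hy
          nlinarith [hMA]
        · positivity
      exact hmono (Set.mem_Ici.2 (le_refl A)) (Set.mem_Ici.2 h) h
  rw [hFA] at key
  simp only [hF] at key
  linarith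

/-- If `G` has `m ≥ 1` edges, `M₁` is the minimum of the d-radii, `R_g` the geometric mean of
the d-radii and `σ²` their variance, then `SO(G) ≤ m·(R_g + σ²/(2M₁))`. -/
theorem stmt6 {V : Type*} [Fintype V] [DecidableEq V] (G : SimpleGraph V) [DecidableRel G.Adj]
    (m : ℕ) (hm : G.edgeFinset.card = m) (h1 : 1 ≤ m) (M₁ : ℝ)
    (hlb : ∀ e ∈ G.edgeFinset, M₁ ≤ dRad G e)
    (hmem : ∃ e ∈ G.edgeFinset, dRad G e = M₁) :
    somborIndex G ≤
      (m : ℝ) * ((∏ e ∈ G.edgeFinset, dRad G e) ^ ((1 : ℝ) / m)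
        + ((1 / m) * ∑ e ∈ G.edgeFinset, (dRad G e - somborIndex G / m) ^ 2) / (2 * M₁)) := by
  have hm0 : (0:ℝ) < (m:ℝ) := by exact_mod_cast h1
  obtain ⟨e₀, he₀, he₀eq⟩ := hmem
  have hM₁ : 0 < M₁ := he₀eq ▸ dRad_pos G e₀ he₀
  set s := G.edgeFinset with hs
  set T : ℝ := ∑ e ∈ s, dRad G e with hT
  have hSO : somborIndex G = T := rfl
  set A : ℝ := T / m with hAdef
  have hmA : (m:ℝ) * A = T := by rw [hAdef]; field_simp [hm0.ne']
  -- M₁ ≤ A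
  have hTlb : (m:ℝ) * M₁ ≤ T := by
    calc (m:ℝ) * M₁ = ∑ _e ∈ s, M₁ := by rw [Finset.sum_const, hm, nsmul_eq_mul]
    _ ≤ T := Finset.sum_le_sum hlb
  have hMA : M₁ ≤ A := by rw [hAdef, le_div_iff₀ hm0]; linarith
  have hA : 0 < A := hM₁.trans_le hMA
  set Vr : ℝ := ∑ e ∈ s, (dRad G e - A) ^ 2 with hVr
  have hVnn : 0 ≤ Vr := Finset.sum_nonneg fun e _ => sq_nonneg _
  -- sum of pointwise log bounds
  have hlog : (m:ℝ) * Real.log A - Vr / (2*M₁*A) ≤ ∑ e ∈ s, Real.log (dRad G e) := by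
    have hpt : ∀ e ∈ s, Real.log A + (dRad G e - A)/A - (dRad G e - A)^2/(2*M₁*A)
        ≤ Real.log (dRad G e) := fun e he => keyLog M₁ A hM₁ hMA (hlb e he)
    have := Finset.sum_le_sum hpt
    have hsum : ∑ e ∈ s, (Real.log A + (dRad G e - A)/A - (dRad G e - A)^2/(2*M₁*A))
        = (m:ℝ) * Real.log A + (T - m*A)/A - Vr/(2*M₁*A) := by
      rw [Finset.sum_sub_distrib, Finset.sum_add_distrib, Finset.sum_const, hm,
        ← Finset.sum_div, ← Finset.sum_div, nsmul_eq_mul, Finset.sum_sub_distrib,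
        Finset.sum_const, hm, nsmul_eq_mul]
    rw [hsum] at this
    rw [hmA, sub_self, zero_div, add_zero] at this
    exact this
  -- geometric mean
  have hfpos : ∀ e ∈ s, 0 < dRad G e := fun e he => dRad_pos G e he
  have hPpos : 0 < ∏ e ∈ s, dRad G e := Finset.prod_pos hfpos
  have hGm : (∏ e ∈ s, dRad G e) ^ ((1:ℝ)/m)
      = Real.exp ((1/m) * ∑ e ∈ s, Real.log (dRad G e)) := by
    rw [Real.rpow_def_of_pos hPpos, Real.log_prod (fun e he => (hfpos e he).ne'),
      mul_comm]
  -- lower bound geometric mean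
  set c : ℝ := Vr / m / (2*M₁*A) with hc
  have hcnn : 0 ≤ c := by positivity
  have hGlb : A - A * c ≤ (∏ e ∈ s, dRad G e) ^ ((1:ℝ)/m) := by
    rw [hGm]
    have h2 : Real.log A - c ≤ (1/m) * ∑ e ∈ s, Real.log (dRad G e) := by
      rw [hc]
      rw [← sub_nonneg] at hlog ⊢
      have : (1/m) * (∑ e ∈ s, Real.log (dRad G e) - ((m:ℝ) * Real.log A - Vr/(2*M₁*A)))
          = (1/m) * ∑ e ∈ s, Real.log (dRad G e) - (Real.log A - Vr/m/(2*M₁*A)) := by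
        field_simp
      rw [← this]
      exact mul_nonneg (by positivity) hlog
    calc A - A * c = A * (-c + 1) := by ring
    _ ≤ A * Real.exp (-c) := mul_le_mul_of_nonneg_left (Real.add_one_le_exp (-c)) hA.le
    _ = Real.exp (Real.log A - c) := by
        rw [Real.exp_sub, Real.exp_log hA, Real.exp_neg, div_eq_mul_inv]
    _ ≤ _ := Real.exp_le_exp.2 h2
  -- finish
  have hAc : A * c = Vr / m / (2*M₁) := by
    rw [hc]; field_simp
  rw [hSO]
  have hrhs : ((1:ℝ)/m * ∑ e ∈ s, (dRad G e - T/m)^2) / (2*M₁) = Vr/m/(2*M₁) := by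
    rw [hVr, hAdef]; ring
  rw [hrhs]
  nlinarith [hAc, hmA, mul_le_mul_of_nonneg_left hGlb hm0.le]
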